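/- The relation ⫝ᵇᵘ on ultraimaginaries satisfies: (Invariance) if a_E b_F c_G ≡ a'_E b'_F c'_G then b_F ⫝ᵇᵘ_{a_E} c_G iff b'_F ⫝ᵇᵘ_{a'_E} c'_G; (Symmetry) b_F ⫝ᵇᵘ_{a_E} c_G iff c_G ⫝ᵇᵘ_{a_E} b_F; (Monotonicity) if b_F c_G ⫝ᵇᵘ_{a_E} d_H e_I then b_F ⫝ᵇᵘ_{a_E} d_H; (Transitivity) if b_F ⫝ᵇᵘ_{a_E} c_G and d_H ⫝ᵇᵘ_{a_E b_F} c_G then b_F d_H ⫝ᵇᵘ_{a_E} c_G; (Normality) if b_F ⫝ᵇᵘ_{a_E} c_G then a_E b_F ⫝ᵇᵘ_{a_E} a_E c_G; (Anti-reflexivity) if b_F ⫝ᵇᵘ_{a_E} b_F then b_F ∈ bddᵘ(a_E). -/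

import Mathlib

open FirstOrder Cardinal

universe u v w

namespace BddUltra

variable (L : FirstOrder.Language.{u, u}) (M : Type u) [L.Structure M]

/-- The automorphism group of `M` (composition as multiplication). -/
instance : Group (M ≃[L] M) where
  mul f g := f.comp g
  one := Language.Equiv.refl L M
  inv := Language.Equiv.symm
  mul_assoc f g h := by ext x; rfl
  one_mul f := by ext x; rfl
  mul_one f := by ext x; rfl
  inv_mul_cancel f := by ext x; exact f.toEquiv.symm_apply_apply x

/-- The cardinality `|T|` of the theory: the cardinality of the language plus `ℵ₀`. -/
def cardT : Cardinal.{u} := L.card + ℵ₀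

/-- Two tuples realize the same complete type over `∅`. -/
def SameType {α : Type v} (a b : α → M) : Prop :=
  ∀ φ : L.Formula α, φ.Realize a ↔ φ.Realize b

/-- Two tuples realize the same complete type over the set `A ⊆ M` of parameters. -/
def SameTypeOver (A : Set M) {α : Type v} (a b : α → M) : Prop :=
  ∀ φ : L.Formula (↥A ⊕ α),
    φ.Realize (Sum.elim (Subtype.val : ↥A → M) a) ↔
      φ.Realize (Sum.elim (Subtype.val : ↥A → M) b)

theorem SameType.comp {α : Type v} {γ : Type w} {a b : α → M} (h : SameType L M a b)
    (g : γ → α) : SameType L M (a ∘ g) (b ∘ g) := by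
  intro φ
  have := h (φ.relabel g)
  rwa [Language.Formula.realize_relabel, Language.Formula.realize_relabel] at this

/-- An invariant equivalence relation of arity `α` on `α`-tuples from `M`. -/
structure IER (α : Type u) : Type u where
  rel : (α → M) → (α → M) → Prop
  equiv : Equivalence rel
  invariant : ∀ a b c d : α → M,
    SameType L M (Sum.elim a b) (Sum.elim c d) → (rel a b ↔ rel c d)

def IER.setoid {α : Type u} (E : IER L M α) : Setoid (α → M) := ⟨E.rel, E.equiv⟩

/-- The pair (juxtaposition) of two invariant equivalence relations. -/
def IER.prod {α β : Type u} (E : IER L M α) (F : IER L M β) : IER L M (α ⊕ β) where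
  rel x y := E.rel (x ∘ Sum.inl) (y ∘ Sum.inl) ∧ F.rel (x ∘ Sum.inr) (y ∘ Sum.inr)
  equiv := ⟨fun _ => ⟨E.equiv.refl _, F.equiv.refl _⟩,
    fun h => ⟨E.equiv.symm h.1, F.equiv.symm h.2⟩,
    fun h h' => ⟨E.equiv.trans h.1 h'.1, F.equiv.trans h.2 h'.2⟩⟩
  invariant := by
    intro a b c d h
    have e1 : ∀ (x : α ⊕ β → M) (y : α ⊕ β → M),
        (Sum.elim x y) ∘ (Sum.map Sum.inl Sum.inl : α ⊕ α → (α ⊕ β) ⊕ (α ⊕ β))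
          = Sum.elim (x ∘ Sum.inl) (y ∘ Sum.inl) := by
      intro x y; funext i; cases i <;> rfl
    have e2 : ∀ (x : α ⊕ β → M) (y : α ⊕ β → M),
        (Sum.elim x y) ∘ (Sum.map Sum.inr Sum.inr : β ⊕ β → (α ⊕ β) ⊕ (α ⊕ β))
          = Sum.elim (x ∘ Sum.inr) (y ∘ Sum.inr) := by
      intro x y; funext i; cases i <;> rfl
    have h1 := h.comp (L := L) (M := M) (Sum.map Sum.inl Sum.inl)
    have h2 := h.comp (L := L) (M := M) (Sum.map Sum.inr Sum.inr)
    rw [e1, e1] at h1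
    rw [e2, e2] at h2
    exact and_congr (E.invariant _ _ _ _ h1) (F.invariant _ _ _ _ h2)

/-- The set of automorphisms fixing the ultraimaginary `a_E`. -/
def autU {α : Type u} (E : IER L M α) (a : α → M) : Set (M ≃[L] M) :=
  {σ | E.rel a (⇑σ ∘ a)}

/-- The set of automorphisms fixing the set `A` pointwise. -/
def autSet (A : Set M) : Set (M ≃[L] M) := {σ | ∀ x ∈ A, σ x = x}

/-- The set of automorphisms fixing the set `A` and the tuple `u` pointwise. -/
def autSetTup (A : Set M) {γ : Type v} (u : γ → M) : Set (M ≃[L] M) :=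
  {σ | (∀ x ∈ A, σ x = x) ∧ ∀ i, σ (u i) = u i}

/-- The ultraimaginary `b_F` is bounded over a parameter set whose pointwise
stabilizer is `X`: the `X`-orbit of `b` meets fewer than `κ` classes of `F`. -/
def BddU (κ : Cardinal.{u}) (X : Set (M ≃[L] M)) {β : Type u} (F : IER L M β)
    (b : β → M) : Prop :=
  ∃ S : Set (β → M), #S < κ ∧ ∀ σ ∈ X, ∃ s ∈ S, F.rel (⇑σ ∘ b) s

/-- The cardinality of the orbit of the ultraimaginary `b_F` under the set `X`
of automorphisms. -/
def orbitCard (X : Set (M ≃[L] M)) {β : Type u} (F : IER L M β) (b : β → M) :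
    Cardinal.{u} :=
  #(Set.range fun σ : X => Quotient.mk F.setoid (⇑σ.1 ∘ b))

/-- `b ⫝ᵇᵘ_A c`, expressed in terms of the pointwise stabilizers `XA`, `XAb`, `XAc` of
`A`, `Ab` and `Ac`: an ultraimaginary is bounded over `Ab` and over `Ac` iff it is
bounded over `A`. -/
def IndepBU (κ : Cardinal.{u}) (XA XAb XAc : Set (M ≃[L] M)) : Prop :=
  ∀ (δ : Type u) (H : IER L M δ) (d : δ → M),
    (BddU L M κ XAb H d ∧ BddU L M κ XAc H d) ↔ BddU L M κ XA H d

/-- The set of automorphisms fixing an elementary substructure pointwise. -/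
def autES (N : L.ElementarySubstructure M) : Set (M ≃[L] M) :=
  autSet L M (N : Set M)

/-- `Autf(𝕄/x)` where `X = Aut(𝕄/x)`: the subgroup generated by all pointwise
stabilizers of small models that are contained in `X`. -/
def autfGen (κ : Cardinal.{u}) (X : Set (M ≃[L] M)) : Subgroup (M ≃[L] M) :=
  Subgroup.closure {σ | ∃ N : L.ElementarySubstructure M,
    #(N : Set M) < κ ∧ autES L M N ⊆ X ∧ σ ∈ autES L M N}

/-- The group of Lascar strong automorphisms over the set `A ⊆ M`: generated by the
pointwise stabilizers of small models containing `A`. -/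
def lascarGrp (κ : Cardinal.{u}) (A : Set M) : Subgroup (M ≃[L] M) :=
  Subgroup.closure {σ | ∃ N : L.ElementarySubstructure M,
    #(N : Set M) < κ ∧ A ⊆ (N : Set M) ∧ σ ∈ autES L M N}

/-- κ-saturation: every finitely realizable set of formulas over a parameter tuple of
arity `< κ`, in `< κ` many variables, is realized. -/
def Saturated (κ : Cardinal.{u}) : Prop :=
  ∀ (α β : Type u), #α < κ → #β < κ → ∀ (a : α → M) (p : Set (L.Formula (α ⊕ β))),
    (∀ s : Finset (L.Formula (α ⊕ β)), ↑s ⊆ p →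
      ∃ b : β → M, ∀ φ ∈ s, φ.Realize (Sum.elim a b)) →
    ∃ b : β → M, ∀ φ ∈ p, φ.Realize (Sum.elim a b)

/-- Strong κ-homogeneity: tuples of arity `< κ` with the same type over `∅` are
conjugate under an automorphism. -/
def Homog (κ : Cardinal.{u}) : Prop :=
  ∀ (α : Type u) (a b : α → M), #α < κ → SameType L M a b →
    ∃ σ : M ≃[L] M, ∀ i, σ (a i) = b i

/-- `M` is a monster model with bound `κbar`: `κbar` is a sufficiently large
(uncountable, regular, strong limit, above `|T|`) cardinal, and `M` is
`κbar`-saturated and strongly `κbar`-homogeneous. -/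
structure Monster (κbar : Cardinal.{u}) : Prop where
  aleph0_lt : ℵ₀ < κbar
  isRegular : κbar.IsRegular
  strongLimit : ∀ ρ : Cardinal.{u}, ρ < κbar → 2 ^ ρ < κbar
  lang_lt : L.card < κbar
  saturated : Saturated L M κbar
  homog : Homog L M κbar

/-- A hyperimaginary: the class of a countable tuple under a countably
type-definable (over `∅`) equivalence relation. -/
structure Hyp : Type u where
  rep : ℕ → M
  fmls : Set (L.Formula (ℕ ⊕ ℕ))
  countable : fmls.Countable
  equiv : Equivalence fun a b : ℕ → M => ∀ φ ∈ fmls, φ.Realize (Sum.elim a b)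

/-- The automorphisms fixing each hyperimaginary in the set `A`. -/
def autHyp (A : Set (Hyp L M)) : Set (M ≃[L] M) :=
  {σ | ∀ h ∈ A, ∀ φ ∈ h.fmls, φ.Realize (Sum.elim h.rep (⇑σ ∘ h.rep))}

/-- The automorphisms fixing each hyperimaginary in `A` and the tuple `u` pointwise. -/
def autHypTup (A : Set (Hyp L M)) {γ : Type v} (u : γ → M) : Set (M ≃[L] M) :=
  {σ | σ ∈ autHyp L M A ∧ ∀ i, σ (u i) = u i}

/-- Flattening of a finite subsequence of a sequence of tuples into a single tuple. -/
def flatten {ι : Type v} {β : Type w} (f : ι → β → M) {n : ℕ} (s : Fin n → ι) :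
    Fin n × β → M := fun p => f (s p.1) p.2

/-- A sequence of tuples is `A`-indiscernible (`A ⊆ M` a set of real parameters). -/
def IndiscOver (A : Set M) {ι : Type v} [Preorder ι] {β : Type w} (f : ι → β → M) : Prop :=
  ∀ (n : ℕ) (s t : Fin n → ι), StrictMono s → StrictMono t →
    SameTypeOver L M A (flatten M f s) (flatten M f t)

/-- Two sequences have the same Ehrenfeucht–Mostowski type over `A ⊆ M`. -/
def SameEMOver (A : Set M) {ι : Type v} [Preorder ι] {ι' : Type w} [Preorder ι']
    {β : Type u} (f : ι → β → M) (g : ι' → β → M) : Prop :=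
  ∀ (n : ℕ) (s : Fin n → ι) (t : Fin n → ι'), StrictMono s → StrictMono t →
    SameTypeOver L M A (flatten M f s) (flatten M g t)

/-- A sequence of tuples is `A`-indiscernible, for `A` a set of hyperimaginaries:
any two increasing tuples from the sequence are conjugate under `Aut(𝕄/A)`. -/
def IndiscOverHyp (A : Set (Hyp L M)) {ι : Type v} [Preorder ι] {β : Type w}
    (f : ι → β → M) : Prop :=
  ∀ (n : ℕ) (s t : Fin n → ι), StrictMono s → StrictMono t →
    ∃ σ ∈ autHyp L M A, ∀ (i : Fin n) (x : β), σ (f (s i) x) = f (t i) x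

/-- Two sequences have the same EM-type over the set `A` of hyperimaginaries. -/
def SameEMOverHyp (A : Set (Hyp L M)) {ι : Type v} [Preorder ι] {ι' : Type w} [Preorder ι']
    {β : Type u} (f : ι → β → M) (g : ι' → β → M) : Prop :=
  ∀ (n : ℕ) (s : Fin n → ι) (t : Fin n → ι'), StrictMono s → StrictMono t →
    ∃ σ ∈ autHyp L M A, ∀ (i : Fin n) (x : β), σ (f (s i) x) = g (t i) x

/-- A sequence of `β`-tuples from `N`, indexed by an arbitrary small linear order. -/
structure Seq (N : Type u) (β : Type u) : Type (u + 1) where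
  idx : Type u
  [ord : LinearOrder idx]
  val : idx → β → N

attribute [instance] Seq.ord

/-- Concatenation `I + J` of sequences. -/
def Seq.concat {N β : Type u} (I J : Seq N β) : Seq N β where
  idx := I.idx ⊕ₗ J.idx
  val := fun x => Sum.elim I.val J.val (ofLex x)

/-- The sequence `I` flattened into a single tuple. -/
def Seq.flat {N β : Type u} (I : Seq N β) : I.idx × β → N := fun p => I.val p.1 p.2

/-- The image `σ · I` of a sequence under an automorphism. -/
def Seq.map {β : Type u} (σ : M ≃[L] M) (I : Seq M β) : Seq M β where
  idx := I.idx
  ord := I.ord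
  val := fun i x => σ (I.val i x)

/-- The sequence `(b_i)_{i < ω}` packaged as a `Seq`. -/
def Seq.ofNat {N β : Type u} (b : ℕ → β → N) : Seq N β where
  idx := ULift.{u} ℕ
  val := fun n => b n.down

/-- `I ∼_A J`: both sequences are infinite and `I + J` or `J + I` is `A`-indiscernible. -/
def SimSeq (A : Set M) {β : Type u} (I J : Seq M β) : Prop :=
  Infinite I.idx ∧ Infinite J.idx ∧
    (IndiscOver L M A (I.concat J).val ∨ IndiscOver L M A (J.concat I).val)

/-- `I ≈_A J`: the transitive closure of `∼_A`. -/
def ApproxSeq (A : Set M) {β : Type u} : Seq M β → Seq M β → Prop :=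
  Relation.TransGen (SimSeq L M A)

/-- `I ∼_A J` for `A` a set of hyperimaginaries. -/
def SimSeqHyp (A : Set (Hyp L M)) {β : Type u} (I J : Seq M β) : Prop :=
  Infinite I.idx ∧ Infinite J.idx ∧
    (IndiscOverHyp L M A (I.concat J).val ∨ IndiscOverHyp L M A (J.concat I).val)

/-- `I ≈_A J` for `A` a set of hyperimaginaries. -/
def ApproxSeqHyp (A : Set (Hyp L M)) {β : Type u} : Seq M β → Seq M β → Prop :=
  Relation.TransGen (SimSeqHyp L M A)

/-- `u ⫝ᵇᵘ_A v` for tuples `u`, `v` over a set `A ⊆ M` of real parameters. -/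
def IndepBUReal (κ : Cardinal.{u}) (A : Set M) {γ : Type v} {δ : Type w}
    (x : γ → M) (y : δ → M) : Prop :=
  IndepBU L M κ (autSet L M A) (autSetTup L M A x) (autSetTup L M A y)

/-- `u ⫝ᵇᵘ_A v` for tuples `u`, `v` over a set `A` of hyperimaginaries. -/
def IndepBUHyp (κ : Cardinal.{u}) (A : Set (Hyp L M)) {γ : Type v} {δ : Type w}
    (x : γ → M) (y : δ → M) : Prop :=
  IndepBU L M κ (autHyp L M A) (autHypTup L M A x) (autHypTup L M A y)

/-- A total `⫝ᵇᵘ`-Morley sequence over the set `A ⊆ M`. -/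
def TotalMorleyReal (κ : Cardinal.{u}) (A : Set M) {β : Type u} (b : ℕ → β → M) : Prop :=
  IndiscOver L M A b ∧
    ∀ I J : Seq M β, #I.idx < κ → #J.idx < κ →
      SameEMOver L M A ((I.concat J).val) b →
        IndepBUReal L M κ A I.flat J.flat

/-- A total `⫝ᵇᵘ`-Morley sequence over the set `A` of hyperimaginaries. -/
def TotalMorleyHyp (κ : Cardinal.{u}) (A : Set (Hyp L M)) {β : Type u}
    (b : ℕ → β → M) : Prop :=
  IndiscOverHyp L M A b ∧
    ∀ I J : Seq M β, #I.idx < κ → #J.idx < κ →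
      SameEMOverHyp L M A ((I.concat J).val) b →
        IndepBUHyp L M κ A I.flat J.flat

/-- `tp(b/Ac)` divides over `A`. -/
def Divides (A : Set M) {β : Type v} {γ : Type w} (b : β → M) (c : γ → M) : Prop :=
  ∃ ci : ℕ → γ → M, ci 0 = c ∧ IndiscOver L M A ci ∧
    ¬∃ b' : β → M, ∀ (i : ℕ) (φ : L.Formula (↥A ⊕ (β ⊕ γ))),
      φ.Realize (Sum.elim (Subtype.val : ↥A → M) (Sum.elim b c)) →
        φ.Realize (Sum.elim (Subtype.val : ↥A → M) (Sum.elim b' (ci i)))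

/-- The partition relation `λ → (β)^{<ω}_γ`. -/
def ArrowRel (lam : Cardinal.{u}) (ot : Ordinal.{u}) (c : Cardinal.{u}) : Prop :=
  ∀ f : Finset lam.ord.ToType → c.ord.ToType,
    ∃ X : Set lam.ord.ToType, Nonempty (↥X ≃o ot.ToType) ∧
      ∀ s t : Finset lam.ord.ToType, ↑s ⊆ X → ↑t ⊆ X → s.card = t.card → f s = f t

/-- The Lascar strong automorphism group over a set `A` of hyperimaginaries:
generated by pointwise stabilizers of small models fixing every element of `A`. -/
def lascarHypGrp (κ : Cardinal.{u}) (A : Set (Hyp L M)) : Subgroup (M ≃[L] M) :=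
  Subgroup.closure {σ | ∃ N : L.ElementarySubstructure M,
    #(N : Set M) < κ ∧ autES L M N ⊆ autHyp L M A ∧ σ ∈ autES L M N}

/-- `b_F ⫝ᵇᵘ_{a_E} c_G` for ultraimaginaries. -/
def IndepU (κ : Cardinal.{u}) {α β γ : Type u} (E : IER L M α) (a : α → M)
    (F : IER L M β) (b : β → M) (G : IER L M γ) (c : γ → M) : Prop :=
  IndepBU L M κ (autU L M E a) (autU L M E a ∩ autU L M F b)
    (autU L M E a ∩ autU L M G c)


section Aux

variable {L : FirstOrder.Language.{u, u}} {M : Type u} [L.Structure M]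

lemma sameType_equiv_comp {ι : Type v} (σ : M ≃[L] M) (z : ι → M) :
    SameType L M (⇑σ ∘ z) z := fun φ => Language.StrongHomClass.realize_formula σ φ

lemma IER.rel_comp {α : Type u} (E : IER L M α) (σ : M ≃[L] M) (x y : α → M) :
    E.rel (⇑σ ∘ x) (⇑σ ∘ y) ↔ E.rel x y := by
  refine E.invariant _ _ _ _ ?_
  have : Sum.elim (⇑σ ∘ x) (⇑σ ∘ y) = ⇑σ ∘ Sum.elim x y := by
    funext i; cases i <;> rfl
  rw [this]
  exact sameType_equiv_comp σ _

lemma equiv_mul_apply (σ τ : M ≃[L] M) (x : M) : (σ * τ) x = σ (τ x) := rfl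

lemma equiv_inv_apply_apply (σ : M ≃[L] M) (x : M) : σ⁻¹ (σ x) = x :=
  σ.toEquiv.symm_apply_apply x

lemma equiv_apply_inv_apply (σ : M ≃[L] M) (x : M) : σ (σ⁻¹ x) = x :=
  σ.toEquiv.apply_symm_apply x

lemma autU_conj {α : Type u} (E : IER L M α) {σ : M ≃[L] M} {a a' : α → M}
    (h : E.rel (⇑σ ∘ a) a') (τ : M ≃[L] M) :
    τ ∈ autU L M E a' ↔ σ⁻¹ * τ * σ ∈ autU L M E a := by
  have h1 : E.rel (⇑τ ∘ ⇑σ ∘ a) (⇑τ ∘ a') := (E.rel_comp τ _ _).2 h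
  have e1 : ⇑σ ∘ (⇑(σ⁻¹ * τ * σ) ∘ a) = ⇑τ ∘ ⇑σ ∘ a := by
    funext i
    show σ ((σ⁻¹ * τ * σ) (a i)) = τ (σ (a i))
    rw [equiv_mul_apply, equiv_mul_apply, equiv_apply_inv_apply]
  constructor
  · intro hm
    show E.rel a _
    rw [← E.rel_comp σ]
    rw [e1]
    exact E.equiv.trans h (E.equiv.trans hm (E.equiv.symm h1))
  · intro hm
    show E.rel a' (⇑τ ∘ a')
    have : E.rel (⇑σ ∘ a) (⇑σ ∘ (⇑(σ⁻¹ * τ * σ) ∘ a)) := (E.rel_comp σ _ _).2 hm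
    rw [e1] at this
    exact E.equiv.trans (E.equiv.symm h) (E.equiv.trans this h1)

lemma BddU.mono {κ : Cardinal.{u}} {X Y : Set (M ≃[L] M)} {β : Type u}
    {F : IER L M β} {b : β → M} (hXY : X ⊆ Y) (h : BddU L M κ Y F b) :
    BddU L M κ X F b := by
  obtain ⟨S, hS, hall⟩ := h
  exact ⟨S, hS, fun σ hσ => hall σ (hXY hσ)⟩

lemma BddU.conj {κ : Cardinal.{u}} {X X' : Set (M ≃[L] M)} {β : Type u}
    {F : IER L M β} {b b' : β → M} (σ : M ≃[L] M)
    (hX : ∀ τ ∈ X', σ⁻¹ * τ * σ ∈ X) (hb : b' = ⇑σ ∘ b)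
    (h : BddU L M κ X F b) : BddU L M κ X' F b' := by
  obtain ⟨S, hS, hall⟩ := h
  refine ⟨(fun s => ⇑σ ∘ s) '' S, lt_of_le_of_lt Cardinal.mk_image_le hS, ?_⟩
  intro τ hτ
  obtain ⟨s, hsS, hrel⟩ := hall _ (hX τ hτ)
  refine ⟨⇑σ ∘ s, Set.mem_image_of_mem _ hsS, ?_⟩
  have e1 : ⇑σ ∘ (⇑(σ⁻¹ * τ * σ) ∘ b) = ⇑τ ∘ b' := by
    subst hb; funext i
    show σ ((σ⁻¹ * τ * σ) (b i)) = τ (σ (b i))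
    rw [equiv_mul_apply, equiv_mul_apply, equiv_apply_inv_apply]
  have := (F.rel_comp σ _ _).2 hrel
  rwa [e1] at this

end Aux


section Aux2

variable {L : FirstOrder.Language.{u, u}} {M : Type u} [L.Structure M]

lemma autU_prod {α β : Type u} (E : IER L M α) (F : IER L M β) (a : α → M) (b : β → M) :
    autU L M (IER.prod L M E F) (Sum.elim a b) = autU L M E a ∩ autU L M F b := rfl

lemma indepU_of_conj {κ : Cardinal.{u}} {α β γ : Type u} {E : IER L M α}
    {F : IER L M β} {G : IER L M γ} {a a' : α → M} {b b' : β → M} {c c' : γ → M}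
    (σ : M ≃[L] M) (hE : E.rel (⇑σ ∘ a) a') (hF : F.rel (⇑σ ∘ b) b')
    (hG : G.rel (⇑σ ∘ c) c') (h : IndepU L M κ E a F b G c) :
    IndepU L M κ E a' F b' G c' := by
  intro δ H d
  have hd : d = ⇑σ ∘ (⇑σ⁻¹ ∘ d) := funext fun i => (equiv_apply_inv_apply σ (d i)).symm
  have fwd : ∀ X X' : Set (M ≃[L] M), (∀ τ, τ ∈ X' ↔ σ⁻¹ * τ * σ ∈ X) →
      (BddU L M κ X H (⇑σ⁻¹ ∘ d) ↔ BddU L M κ X' H d) := by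
    intro X X' hiff
    constructor
    · exact BddU.conj σ (fun τ hτ => (hiff τ).1 hτ) hd
    · refine BddU.conj σ⁻¹ (fun τ hτ => ?_) rfl
      rw [inv_inv, hiff]
      have e : σ⁻¹ * (σ * τ * σ⁻¹) * σ = τ := by group
      rw [e]; exact hτ
  have m1 := autU_conj E hE
  have m2 := autU_conj F hF
  have m3 := autU_conj G hG
  rw [← fwd (autU L M E a) (autU L M E a') m1,
    ← fwd (autU L M E a ∩ autU L M F b) (autU L M E a' ∩ autU L M F b')
      (fun τ => and_congr (m1 τ) (m2 τ)),
    ← fwd (autU L M E a ∩ autU L M G c) (autU L M E a' ∩ autU L M G c')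
      (fun τ => and_congr (m1 τ) (m3 τ))]
  exact h δ H (⇑σ⁻¹ ∘ d)

end Aux2

/-- Basic properties of `⫝ᵇᵘ` on ultraimaginaries: invariance,
symmetry, monotonicity, transitivity, normality and anti-reflexivity. -/
theorem statement_8 (L : FirstOrder.Language.{u, u}) (M : Type u) [L.Structure M]
    (κbar : Cardinal.{u}) (_mon : Monster L M κbar) :
    (∀ (α β γ : Type u) (E : IER L M α) (F : IER L M β) (G : IER L M γ)
        (a a' : α → M) (b b' : β → M) (c c' : γ → M),
      (∃ σ : M ≃[L] M, E.rel (⇑σ ∘ a) a' ∧ F.rel (⇑σ ∘ b) b' ∧ G.rel (⇑σ ∘ c) c') →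
        (IndepU L M κbar E a F b G c ↔ IndepU L M κbar E a' F b' G c')) ∧
    (∀ (α β γ : Type u) (E : IER L M α) (F : IER L M β) (G : IER L M γ)
        (a : α → M) (b : β → M) (c : γ → M),
      IndepU L M κbar E a F b G c ↔ IndepU L M κbar E a G c F b) ∧
    (∀ (α β γ δ ε : Type u) (E : IER L M α) (F : IER L M β) (G : IER L M γ)
        (H : IER L M δ) (I : IER L M ε)
        (a : α → M) (b : β → M) (c : γ → M) (d : δ → M) (e : ε → M),
      IndepU L M κbar E a (IER.prod L M F G) (Sum.elim b c) (IER.prod L M H I) (Sum.elim d e) →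
        IndepU L M κbar E a F b H d) ∧
    (∀ (α β γ δ : Type u) (E : IER L M α) (F : IER L M β) (G : IER L M γ)
        (H : IER L M δ) (a : α → M) (b : β → M) (c : γ → M) (d : δ → M),
      IndepU L M κbar E a F b G c →
        IndepU L M κbar (IER.prod L M E F) (Sum.elim a b) H d G c →
          IndepU L M κbar E a (IER.prod L M F H) (Sum.elim b d) G c) ∧
    (∀ (α β γ : Type u) (E : IER L M α) (F : IER L M β) (G : IER L M γ)
        (a : α → M) (b : β → M) (c : γ → M),
      IndepU L M κbar E a F b G c →
        IndepU L M κbar E a (IER.prod L M E F) (Sum.elim a b) (IER.prod L M E G) (Sum.elim a c)) ∧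
    (∀ (α β : Type u) (E : IER L M α) (F : IER L M β) (a : α → M) (b : β → M),
      IndepU L M κbar E a F b F b → BddU L M κbar (autU L M E a) F b) := by
  obtain ⟨h0, hreg, _, _, _, _⟩ := _mon
  refine ⟨?_, ?_, ?_, ?_, ?_, ?_⟩
  · -- Invariance
    rintro α β γ E F G a a' b b' c c' ⟨σ, hE, hF, hG⟩
    constructor
    · exact indepU_of_conj σ hE hF hG
    · have hE' : E.rel (⇑σ⁻¹ ∘ a') a := by
        have := (E.rel_comp σ⁻¹ _ _).2 hE
        have e : ⇑σ⁻¹ ∘ (⇑σ ∘ a) = a := funext fun i => equiv_inv_apply_apply σ (a i)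
        rw [e] at this
        exact E.equiv.symm this
      have hF' : F.rel (⇑σ⁻¹ ∘ b') b := by
        have := (F.rel_comp σ⁻¹ _ _).2 hF
        have e : ⇑σ⁻¹ ∘ (⇑σ ∘ b) = b := funext fun i => equiv_inv_apply_apply σ (b i)
        rw [e] at this
        exact F.equiv.symm this
      have hG' : G.rel (⇑σ⁻¹ ∘ c') c := by
        have := (G.rel_comp σ⁻¹ _ _).2 hG
        have e : ⇑σ⁻¹ ∘ (⇑σ ∘ c) = c := funext fun i => equiv_inv_apply_apply σ (c i)
        rw [e] at this
        exact G.equiv.symm this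
      exact indepU_of_conj σ⁻¹ hE' hF' hG'
  · -- Symmetry
    intro α β γ E F G a b c
    constructor
    · exact fun h δ H d => and_comm.trans (h δ H d)
    · exact fun h δ H d => and_comm.trans (h δ H d)
  · -- Monotonicity
    intro α β γ δ ε E F G H I a b c d e h
    intro δ' H' d'
    have key := h δ' H' d'
    rw [autU_prod, autU_prod] at key
    constructor
    · rintro ⟨h1, h2⟩
      refine key.1 ⟨BddU.mono ?_ h1, BddU.mono ?_ h2⟩
      · rintro τ ⟨hx, hy, _⟩; exact ⟨hx, hy⟩
      · rintro τ ⟨hx, hy, _⟩; exact ⟨hx, hy⟩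
    · intro h3
      exact ⟨BddU.mono (fun τ hτ => hτ.1) h3, BddU.mono (fun τ hτ => hτ.1) h3⟩
  · -- Transitivity
    intro α β γ δ E F G H a b c d h1 h2
    intro δ' H' d'
    have k1 := h1 δ' H' d'
    have k2 := h2 δ' H' d'
    rw [autU_prod] at k2
    rw [autU_prod]
    constructor
    · rintro ⟨hbd, hz⟩
      have hz' : BddU L M κbar ((autU L M E a ∩ autU L M F b) ∩ autU L M G c) H' d' := by
        refine BddU.mono ?_ hz
        rintro τ ⟨⟨hx, _⟩, hzz⟩; exact ⟨hx, hzz⟩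
      have hbd' : BddU L M κbar ((autU L M E a ∩ autU L M F b) ∩ autU L M H d) H' d' := by
        refine BddU.mono ?_ hbd
        rintro τ ⟨⟨hx, hy⟩, hw⟩; exact ⟨hx, hy, hw⟩
      exact k1.1 ⟨k2.1 ⟨hbd', hz'⟩, hz⟩
    · intro h3
      exact ⟨BddU.mono (fun τ hτ => hτ.1) h3, BddU.mono (fun τ hτ => hτ.1) h3⟩
  · -- Normality
    intro α β γ E F G a b c h
    intro δ H d
    have key := h δ H d
    rw [autU_prod, autU_prod]
    constructor
    · rintro ⟨h1, h2⟩
      refine key.1 ⟨BddU.mono ?_ h1, BddU.mono ?_ h2⟩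
      · rintro τ ⟨hx, hy⟩; exact ⟨hx, hx, hy⟩
      · rintro τ ⟨hx, hy⟩; exact ⟨hx, hx, hy⟩
    · intro h3
      exact ⟨BddU.mono (fun τ hτ => hτ.1) h3, BddU.mono (fun τ hτ => hτ.1) h3⟩
  · -- Anti-reflexivity
    intro α β E F a b h
    have key := h β F b
    have hb : BddU L M κbar (autU L M E a ∩ autU L M F b) F b := by
      refine ⟨{b}, ?_, ?_⟩
      · rw [Cardinal.mk_singleton]
        exact lt_of_lt_of_le Cardinal.one_lt_aleph0 h0.le
      · intro τ hτ
        exact ⟨b, Set.mem_singleton b, F.equiv.symm hτ.2⟩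
    exact key.1 ⟨hb, hb⟩


end BddUltra
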